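/- Fix θ ∈ E. There exists τ₀ > 0 such that for all τ with |τ| < τ₀ the operator id + 2τH(θ) is invertible, and as τ → 0 the gradient of the look-ahead objective coincides to second order with the Levenberg–Marquardt direction for L: ‖∇L_R^τ(θ) − (id + 2τH(θ))⁻¹(∇L(θ))‖ = O(τ²). In particular, a gradient step on L_R^τ agrees, up to O(τ²), with a Levenberg–Marquardt step on L. -/

import Mathlib

open Asymptotics Filter RealInnerProductSpace

section Aux
open InnerProductSpace

variable {E : Type*} [NormedAddCommGroup E] [InnerProductSpace ℝ E] [FiniteDimensional ℝ E]

theorem lgm_grad_hasFDerivAt (L : E → ℝ) (hL : ContDiff ℝ 2 L) (z : E) :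
    HasFDerivAt (gradient L) (fderiv ℝ (gradient L) z) z := by
  have h1 : HasFDerivAt (fderiv ℝ L) (fderiv ℝ (fderiv ℝ L) z) z :=
    ((hL.fderiv_right (m := 1) (by norm_num)).differentiable (by norm_num) z).hasFDerivAt
  have h2 := ((toDual ℝ E).symm.toContinuousLinearEquiv.toContinuousLinearMap.hasFDerivAt).comp z h1
  have h3 : HasFDerivAt (gradient L)
      ((toDual ℝ E).symm.toContinuousLinearEquiv.toContinuousLinearMap.comp
        (fderiv ℝ (fderiv ℝ L) z)) z := h2
  rw [h3.fderiv]; exact h3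

theorem lgm_hess_symm (L : E → ℝ) (hL : ContDiff ℝ 2 L) (θ : E) (v w : E) :
    ⟪fderiv ℝ (gradient L) θ v, w⟫ = ⟪v, fderiv ℝ (gradient L) θ w⟫ := by
  have h1 : ∀ z, HasFDerivAt L (fderiv ℝ L z) z := fun z =>
    (hL.differentiable (by norm_num) z).hasFDerivAt
  have h2 : HasFDerivAt (fderiv ℝ L) (fderiv ℝ (fderiv ℝ L) θ) θ :=
    ((hL.fderiv_right (m := 1) (by norm_num)).differentiable (by norm_num) θ).hasFDerivAt
  have hsym := second_derivative_symmetric h1 h2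
  have hH : fderiv ℝ (gradient L) θ =
      (toDual ℝ E).symm.toContinuousLinearEquiv.toContinuousLinearMap.comp
        (fderiv ℝ (fderiv ℝ L) θ) := by
    have h3 : HasFDerivAt (gradient L)
        ((toDual ℝ E).symm.toContinuousLinearEquiv.toContinuousLinearMap.comp
          (fderiv ℝ (fderiv ℝ L) θ)) θ :=
      ((toDual ℝ E).symm.toContinuousLinearEquiv.toContinuousLinearMap.hasFDerivAt).comp θ h2
    exact h3.fderiv
  rw [hH]
  simp only [ContinuousLinearMap.coe_comp', Function.comp_apply,
    ContinuousLinearEquiv.coe_coe, LinearIsometryEquiv.coe_toContinuousLinearEquiv]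
  rw [toDual_symm_apply, real_inner_comm, toDual_symm_apply]
  exact hsym v w

theorem lgm_grad_comp (L : E → ℝ) (hL : ContDiff ℝ 2 L) (θ : E) (τ : ℝ) :
    gradient (fun θ' => L (θ' - τ • gradient L θ')) θ =
      gradient L (θ - τ • gradient L θ)
        - τ • fderiv ℝ (gradient L) θ (gradient L (θ - τ • gradient L θ)) := by
  set H := fderiv ℝ (gradient L) θ with hHdef
  set y := θ - τ • gradient L θ with hydef
  have hinner : HasFDerivAt (fun θ' => θ' - τ • gradient L θ')
      (ContinuousLinearMap.id ℝ E - τ • H) θ :=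
    (hasFDerivAt_id θ).sub ((lgm_grad_hasFDerivAt L hL θ).const_smul τ)
  have hcomp : HasFDerivAt (fun θ' => L (θ' - τ • gradient L θ'))
      ((fderiv ℝ L y).comp (ContinuousLinearMap.id ℝ E - τ • H)) θ :=
    ((hL.differentiable (by norm_num) y).hasFDerivAt).comp θ hinner
  have hfd := hcomp.fderiv
  apply ext_inner_right ℝ
  intro w
  have lhs : ⟪gradient (fun θ' => L (θ' - τ • gradient L θ')) θ, w⟫
      = fderiv ℝ (fun θ' => L (θ' - τ • gradient L θ')) θ w := by
    rw [gradient, toDual_symm_apply]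
  have inner_grad : ∀ u, fderiv ℝ L y u = ⟪gradient L y, u⟫ := by
    intro u; rw [gradient, toDual_symm_apply]
  rw [lhs, hfd]
  simp only [ContinuousLinearMap.coe_comp', Function.comp_apply,
    ContinuousLinearMap.coe_sub', ContinuousLinearMap.coe_id', id_eq,
    ContinuousLinearMap.coe_smul', Pi.sub_apply, Pi.smul_apply]
  rw [inner_grad, inner_sub_right, inner_smul_right, ← lgm_hess_symm L hL θ,
    inner_sub_left, inner_smul_left]
  simp [hHdef]

theorem lgm_inverse_isBigO (H : E →L[ℝ] E) :
    (fun τ : ℝ => Ring.inverse (1 + (2*τ) • H) - 1 + (2*τ) • H) =O[nhds 0]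
      (fun τ : ℝ => τ ^ 2) := by
  have h0 := NormedRing.inverse_add_norm_diff_second_order (1 : (E →L[ℝ] E)ˣ)
  have ht : Filter.Tendsto (fun τ : ℝ => (2*τ) • H) (nhds 0) (nhds 0) := by
    have : Continuous (fun τ : ℝ => (2*τ) • H) := by fun_prop
    simpa using this.tendsto 0
  have h1 := (h0.comp_tendsto ht)
  simp only [inv_one, Units.val_one, one_mul, mul_one, Function.comp_def] at h1
  refine h1.trans ?_
  rw [isBigO_iff]
  refine ⟨4 * ‖H‖^2, Eventually.of_forall fun τ => ?_⟩
  have hn : ‖(2*τ) • H‖ = |2*τ| * ‖H‖ := norm_smul (2*τ) H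
  simp only [norm_norm, norm_pow, Real.norm_eq_abs, hn, abs_mul, Nat.abs_ofNat, sq_abs, abs_norm,
    abs_abs]
  rw [mul_pow, mul_pow, sq_abs]; ring_nf; nlinarith [sq_nonneg τ, sq_nonneg ‖H‖]

theorem lgm_rem_isBigO (L : E → ℝ) (hL : ContDiff ℝ 2 L) (θ : E)
    (hLip : ∃ K : NNReal, ∃ s ∈ nhds θ,
      LipschitzOnWith K (fun θ' => fderiv ℝ (gradient L) θ') s) :
    (fun τ : ℝ => gradient L (θ - τ • gradient L θ) - gradient L θ
        + τ • fderiv ℝ (gradient L) θ (gradient L θ)) =O[nhds 0] (fun τ : ℝ => τ ^ 2) := by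
  obtain ⟨K, s, hs, hK⟩ := hLip
  obtain ⟨δ, hδ, hball⟩ := Metric.mem_nhds_iff.1 hs
  set ε := δ / 2 with hε
  have hεpos : 0 < ε := by positivity
  have hεball : Metric.closedBall θ ε ⊆ s :=
    (Metric.closedBall_subset_ball (by simpa [hε] using half_lt_self hδ)).trans hball
  set g := gradient L θ with hg
  set H := fderiv ℝ (gradient L) θ with hH
  rw [isBigO_iff]
  refine ⟨K * ‖g‖ ^ 2, ?_⟩
  have hev : ∀ᶠ τ : ℝ in nhds 0, |τ - 0| < ε / (‖g‖ + 1) :=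
    eventually_abs_sub_lt 0 (by positivity)
  filter_upwards [hev] with τ hτ
  rw [sub_zero] at hτ
  have hτg : |τ| * ‖g‖ ≤ ε := by
    have h1 : |τ| * (‖g‖ + 1) < ε := by
      rw [lt_div_iff₀ (by positivity)] at hτ; linarith
    nlinarith [abs_nonneg τ, norm_nonneg g]
  set r := |τ| * ‖g‖ with hr
  have hrnn : 0 ≤ r := by positivity
  have hsub : Metric.closedBall θ r ⊆ s :=
    (Metric.closedBall_subset_closedBall hτg).trans hεball
  have hymem : θ - τ • g ∈ Metric.closedBall θ r := by
    rw [Metric.mem_closedBall, dist_eq_norm]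
    have : θ - τ • g - θ = -(τ • g) := by abel
    rw [this, norm_neg, norm_smul, Real.norm_eq_abs]
  have key := (convex_closedBall θ r).norm_image_sub_le_of_norm_hasFDerivWithin_le'
    (f := gradient L) (f' := fun z => fderiv ℝ (gradient L) z) (φ := H) (C := (K : ℝ) * r)
    (fun z _ => (lgm_grad_hasFDerivAt L hL z).hasFDerivWithinAt)
    (fun z hz => by
      have hd := hK.dist_le_mul z (hsub hz) θ (hsub (Metric.mem_closedBall_self hrnn))
      rw [dist_eq_norm] at hd
      refine hd.trans ?_
      have hzr : dist z θ ≤ r := Metric.mem_closedBall.1 hz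
      exact mul_le_mul_of_nonneg_left hzr K.2)
    (Metric.mem_closedBall_self hrnn) hymem
  have hyθ : θ - τ • g - θ = -(τ • g) := by abel
  have hHy : H (θ - τ • g - θ) = -(τ • H g) := by
    rw [hyθ, map_neg, map_smul]
  rw [hHy] at key
  have hnormy : ‖θ - τ • g - θ‖ = r := by
    rw [hyθ, norm_neg, norm_smul, Real.norm_eq_abs]
  rw [hnormy] at key
  have heq : gradient L (θ - τ • g) - g + τ • H g
      = gradient L (θ - τ • g) - gradient L θ - -(τ • H g) := by
    rw [← hg]; abel
  rw [heq]
  refine key.trans ?_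
  rw [hr, Real.norm_eq_abs, abs_pow]
  nlinarith [abs_nonneg τ, norm_nonneg g, K.2, sq_abs τ]

end Aux

/-- Fix `θ : E`. If `L` is `C²` and its second derivative (represented as
`θ' ↦ fderiv ℝ (gradient L) θ'`, the Hessian) is Lipschitz on a neighborhood of `θ`, then there
is `τ₀ > 0` such that `id + 2τ H θ` is invertible for `|τ| < τ₀`, and the gradient of the
look-ahead objective agrees with the Levenberg–Marquardt direction up to `O(τ²)`:
`‖∇L_R^τ (θ) - (id + 2τ H θ)⁻¹ (∇L θ)‖ = O(τ²)` as `τ → 0`. -/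
theorem lookahead_gradient_is_levenberg_marquardt
    {E : Type*} [NormedAddCommGroup E] [InnerProductSpace ℝ E] [FiniteDimensional ℝ E]
    (L : E → ℝ) (hL : ContDiff ℝ 2 L) (θ : E)
    (hLip : ∃ K : NNReal, ∃ s ∈ nhds θ,
      LipschitzOnWith K (fun θ' => fderiv ℝ (gradient L) θ') s) :
    ∃ τ₀ : ℝ, 0 < τ₀ ∧
      (∀ τ : ℝ, |τ| < τ₀ →
        IsUnit (ContinuousLinearMap.id ℝ E + (2 * τ) • fderiv ℝ (gradient L) θ)) ∧
      (fun τ : ℝ => gradient (fun θ' => L (θ' - τ • gradient L θ')) θ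
          - Ring.inverse (ContinuousLinearMap.id ℝ E + (2 * τ) • fderiv ℝ (gradient L) θ)
              (gradient L θ))
        =O[nhds 0] (fun τ : ℝ => τ ^ 2) := by
  set H := fderiv ℝ (gradient L) θ with hH
  set g := gradient L θ with hg
  refine ⟨1 / (2 * ‖H‖ + 1), by positivity, ?_, ?_⟩
  · intro τ hτ
    have hτ' : |τ| * (2 * ‖H‖ + 1) < 1 := by
      rw [lt_div_iff₀ (by positivity)] at hτ; linarith
    have hnorm : ‖-((2 * τ) • H)‖ < 1 := by
      rw [norm_neg]
      have hn : ‖(2 * τ) • H‖ = |2 * τ| * ‖H‖ := norm_smul (2 * τ) H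
      rw [hn, abs_mul, Nat.abs_ofNat]
      nlinarith [abs_nonneg τ, norm_nonneg H]
    rw [← ContinuousLinearMap.one_def]
    exact ⟨Units.oneSub (-((2 * τ) • H)) hnorm, by simp [Units.val_oneSub, sub_neg_eq_add]⟩
  · -- Big-O estimate
    set rem : ℝ → E := fun τ => gradient L (θ - τ • g) - g + τ • H g with hrem
    set eop : ℝ → (E →L[ℝ] E) := fun τ => Ring.inverse (1 + (2 * τ) • H) - 1 + (2 * τ) • H
      with heop
    have hrem_O : rem =O[nhds 0] (fun τ : ℝ => τ ^ 2) := lgm_rem_isBigO L hL θ hLip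
    have heop_O : eop =O[nhds 0] (fun τ : ℝ => τ ^ 2) := lgm_inverse_isBigO H
    have heg_O : (fun τ => eop τ g) =O[nhds 0] (fun τ : ℝ => τ ^ 2) := by
      refine IsBigO.trans ?_ heop_O
      rw [isBigO_iff]
      exact ⟨‖g‖, Eventually.of_forall fun τ => by
        rw [mul_comm]; exact (eop τ).le_opNorm g⟩
    have hHrem_O : (fun τ => H (rem τ)) =O[nhds 0] rem := by
      rw [isBigO_iff]
      exact ⟨‖H‖, Eventually.of_forall fun τ => H.le_opNorm (rem τ)⟩
    have hτHrem_O : (fun τ => τ • H (rem τ)) =O[nhds 0] (fun τ : ℝ => τ ^ 2) := by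
      have h1 := (isBigO_refl (fun τ : ℝ => τ) (nhds 0)).smul (hHrem_O.trans hrem_O)
      refine h1.trans ?_
      rw [isBigO_iff]
      refine ⟨1, ?_⟩
      filter_upwards [eventually_abs_sub_lt (0:ℝ) one_pos] with τ hτ
      rw [sub_zero] at hτ
      simp only [smul_eq_mul, Real.norm_eq_abs, one_mul, abs_mul, abs_pow, sq_abs]
      nlinarith [abs_nonneg τ, sq_nonneg τ, sq_abs τ]
    have hsq_O : (fun τ : ℝ => τ ^ 2 • H (H g)) =O[nhds 0] (fun τ : ℝ => τ ^ 2) := by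
      rw [isBigO_iff]
      refine ⟨‖H (H g)‖, Eventually.of_forall fun τ => ?_⟩
      have hn : ‖τ ^ 2 • H (H g)‖ = |τ ^ 2| * ‖H (H g)‖ := norm_smul _ _
      rw [hn, Real.norm_eq_abs, mul_comm]
    have hmain : (fun τ : ℝ => gradient (fun θ' => L (θ' - τ • gradient L θ')) θ
          - Ring.inverse (ContinuousLinearMap.id ℝ E + (2 * τ) • H) g)
        = fun τ : ℝ => τ ^ 2 • H (H g) + (rem τ - τ • H (rem τ)) - eop τ g := by
      funext τ
      have hgradcomp := lgm_grad_comp L hL θ τ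
      rw [← hg, ← hH] at hgradcomp
      have hgy : gradient L (θ - τ • g) = g - τ • H g + rem τ := by
        rw [hrem]; module
      have hid : ContinuousLinearMap.id ℝ E + (2 * τ) • H = 1 + (2 * τ) • H := by
        rw [ContinuousLinearMap.one_def]
      have hinv : Ring.inverse (ContinuousLinearMap.id ℝ E + (2 * τ) • H) g
          = g - (2 * τ) • H g + eop τ g := by
        rw [hid, heop]
        simp only [ContinuousLinearMap.add_apply, ContinuousLinearMap.sub_apply,
          ContinuousLinearMap.one_apply, ContinuousLinearMap.smul_apply]
        abel
      rw [hgradcomp, hinv, hgy]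
      simp only [map_add, map_sub, map_smul, smul_add, smul_sub]
      rw [smul_smul, ← sq, two_mul, add_smul]
      abel
    rw [hmain]
    exact (hsq_O.add (hrem_O.sub hτHrem_O)).sub heg_O
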